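/- arXiv:math/0603123 — 3 statements merged into one kernel-verified Lean document; each statement's English description precedes it below -/
import Mathlib

section
/- In the bipartite ranking problem, the Bayes ranking risk satisfies L* = E[min{η(X)(1−η(X')), η(X')(1−η(X))}] = E[min{η(X), η(X')}] − (E[η(X)])². -/
open MeasureTheory ENNReal Set

/-- The ranking risk `L(r) = P{Z · r(X,X') < 0}` of a ranking rule `r`,
where `(X,Y)` and `(X',Y')` are independent with common law `μ` and `Z = (Y - Y')/2`. -/
noncomputable def rankRisk {𝒳 : Type*} [MeasurableSpace 𝒳]
    (μ : Measure (𝒳 × ℝ)) (r : 𝒳 → 𝒳 → ℝ) : ℝ :=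
  ((μ.prod μ) {p : (𝒳 × ℝ) × (𝒳 × ℝ) | (p.1.2 - p.2.2) / 2 * r p.1.1 p.2.1 < 0}).toReal

/-- A ranking rule is a measurable function `𝒳 × 𝒳 → {-1, 1}`. -/
def IsRankingRule {𝒳 : Type*} [MeasurableSpace 𝒳] (r : 𝒳 → 𝒳 → ℝ) : Prop :=
  Measurable (fun p : 𝒳 × 𝒳 => r p.1 p.2) ∧ ∀ x x', r x x' = 1 ∨ r x x' = -1

/-- The Bayes ranking risk `L* = inf_r L(r)`, the infimum of the ranking risk
over all ranking rules. -/
noncomputable def bayesRankRisk {𝒳 : Type*} [MeasurableSpace 𝒳]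
    (μ : Measure (𝒳 × ℝ)) : ℝ :=
  sInf {l : ℝ | ∃ r : 𝒳 → 𝒳 → ℝ, IsRankingRule r ∧ l = rankRisk μ r}


section Aux
open ENNReal Set

variable {𝒳 : Type*} [MeasurableSpace 𝒳]

lemma wd_prod (ν : Measure 𝒳) [IsFiniteMeasure ν] {f g : 𝒳 → ℝ≥0∞}
    (hf : Measurable f) (hg : Measurable g)
    (hf1 : ∀ x, f x ≤ 1) (hg1 : ∀ x, g x ≤ 1) :
    (ν.withDensity f).prod (ν.withDensity g)
      = (ν.prod ν).withDensity (fun w => f w.1 * g w.2) := by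
  haveI : IsFiniteMeasure (ν.withDensity f) := by
    constructor
    rw [withDensity_apply _ MeasurableSet.univ]
    calc ∫⁻ x in univ, f x ∂ν ≤ ∫⁻ _ in univ, 1 ∂ν := lintegral_mono fun x => hf1 x
    _ = ν univ := by simp
    _ < ⊤ := measure_lt_top ν univ
  haveI : IsFiniteMeasure (ν.withDensity g) := by
    constructor
    rw [withDensity_apply _ MeasurableSet.univ]
    calc ∫⁻ x in univ, g x ∂ν ≤ ∫⁻ _ in univ, 1 ∂ν := lintegral_mono fun x => hg1 x
    _ = ν univ := by simp
    _ < ⊤ := measure_lt_top ν univ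
  refine Measure.prod_eq fun s t hs ht => ?_
  rw [withDensity_apply _ (hs.prod ht), ← Measure.prod_restrict,
    lintegral_prod_mul hf.aemeasurable hg.aemeasurable,
    withDensity_apply _ hs, withDensity_apply _ ht]

lemma map_restrict_pos (μ : Measure (𝒳 × ℝ)) [IsProbabilityMeasure μ]
    (ν : Measure 𝒳) (hν : ν = μ.map Prod.fst)
    (η : 𝒳 → ℝ) (hηm : Measurable η) (hη01 : ∀ x, 0 ≤ η x ∧ η x ≤ 1)
    (hcond : ∀ B : Set 𝒳, MeasurableSet B →
      (μ {p : 𝒳 × ℝ | p.1 ∈ B ∧ p.2 = 1}).toReal = ∫ x in B, η x ∂ν) :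
    (μ.restrict {p : 𝒳 × ℝ | p.2 = 1}).map Prod.fst
      = ν.withDensity (fun x => ENNReal.ofReal (η x)) := by
  haveI : IsProbabilityMeasure ν := hν ▸ Measure.isProbabilityMeasure_map measurable_fst.aemeasurable
  have hS1 : MeasurableSet {p : 𝒳 × ℝ | p.2 = 1} :=
    measurable_snd (measurableSet_singleton 1)
  ext B hB
  rw [Measure.map_apply measurable_fst hB, Measure.restrict_apply (measurable_fst hB),
    withDensity_apply _ hB]
  have hset : Prod.fst ⁻¹' B ∩ {p : 𝒳 × ℝ | p.2 = 1} = {p : 𝒳 × ℝ | p.1 ∈ B ∧ p.2 = 1} := by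
    ext p; exact Iff.rfl
  rw [hset]
  have hfin1 : μ {p : 𝒳 × ℝ | p.1 ∈ B ∧ p.2 = 1} ≠ ⊤ := measure_ne_top _ _
  have hfin2 : ∫⁻ x in B, ENNReal.ofReal (η x) ∂ν ≠ ⊤ := by
    refine ne_of_lt (lt_of_le_of_lt ?_ (measure_lt_top ν B))
    calc ∫⁻ x in B, ENNReal.ofReal (η x) ∂ν ≤ ∫⁻ _ in B, 1 ∂ν :=
      lintegral_mono fun x => ENNReal.ofReal_le_one.2 (hη01 x).2
    _ = ν B := by simp
  refine (ENNReal.toReal_eq_toReal_iff' hfin1 hfin2).1 ?_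
  rw [hcond B hB]
  rw [integral_eq_lintegral_of_nonneg_ae (Filter.Eventually.of_forall fun x => (hη01 x).1)
    (hηm.aestronglyMeasurable.restrict)]

lemma map_restrict_neg (μ : Measure (𝒳 × ℝ)) [IsProbabilityMeasure μ]
    (hY : μ {p : 𝒳 × ℝ | p.2 ≠ 1 ∧ p.2 ≠ -1} = 0)
    (ν : Measure 𝒳) (hν : ν = μ.map Prod.fst)
    (η : 𝒳 → ℝ) (hηm : Measurable η) (hη01 : ∀ x, 0 ≤ η x ∧ η x ≤ 1)
    (hcond : ∀ B : Set 𝒳, MeasurableSet B →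
      (μ {p : 𝒳 × ℝ | p.1 ∈ B ∧ p.2 = 1}).toReal = ∫ x in B, η x ∂ν) :
    (μ.restrict {p : 𝒳 × ℝ | p.2 = -1}).map Prod.fst
      = ν.withDensity (fun x => 1 - ENNReal.ofReal (η x)) := by
  haveI : IsProbabilityMeasure ν := hν ▸ Measure.isProbabilityMeasure_map measurable_fst.aemeasurable
  have hS1 : MeasurableSet {p : 𝒳 × ℝ | p.2 = 1} :=
    measurable_snd (measurableSet_singleton 1)
  have hSm : MeasurableSet {p : 𝒳 × ℝ | p.2 = -1} :=
    measurable_snd (measurableSet_singleton (-1))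
  have hpos := map_restrict_pos μ ν hν η hηm hη01 hcond
  ext B hB
  rw [Measure.map_apply measurable_fst hB, Measure.restrict_apply (measurable_fst hB),
    withDensity_apply _ hB]
  -- ν B = μ (fst⁻¹ B)
  have hνB : ν B = μ (Prod.fst ⁻¹' B) := by
    rw [hν, Measure.map_apply measurable_fst hB]
  -- split
  have hsplit : μ (Prod.fst ⁻¹' B) =
      μ (Prod.fst ⁻¹' B ∩ {p : 𝒳 × ℝ | p.2 = 1})
        + μ (Prod.fst ⁻¹' B ∩ {p : 𝒳 × ℝ | p.2 = -1}) := by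
    have h1 : μ (Prod.fst ⁻¹' B) =
        μ (Prod.fst ⁻¹' B ∩ ({p : 𝒳 × ℝ | p.2 = 1} ∪ {p : 𝒳 × ℝ | p.2 = -1})) := by
      have hd : μ (Prod.fst ⁻¹' B \ ({p : 𝒳 × ℝ | p.2 = 1} ∪ {p : 𝒳 × ℝ | p.2 = -1})) = 0 := by
        refine measure_mono_null ?_ hY
        intro p hp
        simp only [Set.mem_diff, Set.mem_union, Set.mem_setOf_eq] at hp ⊢
        exact ⟨fun h => hp.2 (Or.inl h), fun h => hp.2 (Or.inr h)⟩
      rw [← measure_inter_add_diff (Prod.fst ⁻¹' B) (hS1.union hSm), hd, add_zero]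
    rw [h1, Set.inter_union_distrib_left]
    refine measure_union ?_ (measurable_fst hB |>.inter hSm)
    refine Set.disjoint_left.2 fun p hp hp' => ?_
    have h1 : p.2 = 1 := hp.2
    have h2 : p.2 = -1 := hp'.2
    rw [h1] at h2; norm_num at h2
  -- express lintegral of 1 - ofReal η
  have hint : ∫⁻ x in B, (1 - ENNReal.ofReal (η x)) ∂ν
      = ν B - ∫⁻ x in B, ENNReal.ofReal (η x) ∂ν := by
    have := lintegral_sub (μ := ν.restrict B) (f := fun _ => (1 : ℝ≥0∞))
      (g := fun x => ENNReal.ofReal (η x)) (hηm.ennreal_ofReal)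
      ?_ (Filter.Eventually.of_forall fun x => ENNReal.ofReal_le_one.2 (hη01 x).2)
    · simpa using this
    · refine ne_of_lt (lt_of_le_of_lt ?_ (measure_lt_top ν B))
      calc ∫⁻ x in B, ENNReal.ofReal (η x) ∂ν ≤ ∫⁻ _ in B, 1 ∂ν :=
        lintegral_mono fun x => ENNReal.ofReal_le_one.2 (hη01 x).2
      _ = ν B := by simp
  rw [hint]
  -- use hpos to replace the lintegral by the measure of {Y=1} slice
  have hposB : ∫⁻ x in B, ENNReal.ofReal (η x) ∂ν
      = μ (Prod.fst ⁻¹' B ∩ {p : 𝒳 × ℝ | p.2 = 1}) := by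
    rw [← withDensity_apply _ hB, ← hpos, Measure.map_apply measurable_fst hB,
      Measure.restrict_apply (measurable_fst hB)]
  rw [hposB, hνB, hsplit]
  rw [ENNReal.add_sub_cancel_left (measure_ne_top _ _)]


lemma rankRisk_eq (μ : Measure (𝒳 × ℝ)) [IsProbabilityMeasure μ]
    (hY : μ {p : 𝒳 × ℝ | p.2 ≠ 1 ∧ p.2 ≠ -1} = 0)
    (ν : Measure 𝒳) (hν : ν = μ.map Prod.fst)
    (η : 𝒳 → ℝ) (hηm : Measurable η) (hη01 : ∀ x, 0 ≤ η x ∧ η x ≤ 1)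
    (hcond : ∀ B : Set 𝒳, MeasurableSet B →
      (μ {p : 𝒳 × ℝ | p.1 ∈ B ∧ p.2 = 1}).toReal = ∫ x in B, η x ∂ν)
    (r : 𝒳 → 𝒳 → ℝ) (hr : IsRankingRule r) :
    rankRisk μ r = (∫⁻ w : 𝒳 × 𝒳,
      (if r w.1 w.2 = 1 then (1 - ENNReal.ofReal (η w.1)) * ENNReal.ofReal (η w.2)
        else ENNReal.ofReal (η w.1) * (1 - ENNReal.ofReal (η w.2))) ∂(ν.prod ν)).toReal := by
  haveI : IsProbabilityMeasure ν := hν ▸ Measure.isProbabilityMeasure_map measurable_fst.aemeasurable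
  have hS1 : MeasurableSet {p : 𝒳 × ℝ | p.2 = 1} :=
    measurable_snd (measurableSet_singleton 1)
  have hSm : MeasurableSet {p : 𝒳 × ℝ | p.2 = -1} :=
    measurable_snd (measurableSet_singleton (-1))
  set S1 : Set (𝒳 × ℝ) := {p | p.2 = 1}
  set Sm : Set (𝒳 × ℝ) := {p | p.2 = -1}
  set C : Set (𝒳 × 𝒳) := {w | r w.1 w.2 = 1} with hC
  have hCm : MeasurableSet C := hr.1 (measurableSet_singleton 1)
  set F : (𝒳 × ℝ) × (𝒳 × ℝ) → 𝒳 × 𝒳 := Prod.map Prod.fst Prod.fst with hF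
  have hFm : Measurable F := measurable_fst.prodMap measurable_fst
  set E : Set ((𝒳 × ℝ) × (𝒳 × ℝ)) :=
    {p | (p.1.2 - p.2.2) / 2 * r p.1.1 p.2.1 < 0} with hE
  set G : Set ((𝒳 × ℝ) × (𝒳 × ℝ)) :=
    {p | (p.1.2 = 1 ∨ p.1.2 = -1) ∧ (p.2.2 = 1 ∨ p.2.2 = -1)} with hG
  have hGm : MeasurableSet G := by
    apply MeasurableSet.inter
    · exact ((measurable_snd.comp measurable_fst) (measurableSet_singleton 1)).union
        ((measurable_snd.comp measurable_fst) (measurableSet_singleton (-1)))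
    · exact ((measurable_snd.comp measurable_snd) (measurableSet_singleton 1)).union
        ((measurable_snd.comp measurable_snd) (measurableSet_singleton (-1)))
  set A1 : Set ((𝒳 × ℝ) × (𝒳 × ℝ)) := (F ⁻¹' C) ∩ (Sm ×ˢ S1) with hA1
  set A2 : Set ((𝒳 × ℝ) × (𝒳 × ℝ)) := (F ⁻¹' Cᶜ) ∩ (S1 ×ˢ Sm) with hA2
  -- E ∩ G = A1 ∪ A2
  have hEG : E ∩ G = A1 ∪ A2 := by
    ext p
    simp only [hE, hG, hA1, hA2, Set.mem_inter_iff, Set.mem_union, Set.mem_setOf_eq,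
      Set.mem_preimage, Set.mem_prod, Set.mem_compl_iff, hF, Prod.map, hC]
    rcases hr.2 p.1.1 p.2.1 with hdr | hdr <;>
      constructor
    · rintro ⟨hlt, (ha | ha), (hb | hb)⟩ <;> rw [ha, hb, hdr] at hlt <;> norm_num at hlt
      exact Or.inl ⟨hdr, ha, hb⟩
    · rintro (⟨_, ha, hb⟩ | ⟨hne, _, _⟩)
      · exact ⟨by rw [ha, hb, hdr]; norm_num, Or.inr ha, Or.inl hb⟩
      · exact absurd hdr hne
    · rintro ⟨hlt, (ha | ha), (hb | hb)⟩ <;> rw [ha, hb, hdr] at hlt <;> norm_num at hlt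
      exact Or.inr ⟨by rw [hdr]; norm_num, ha, hb⟩
    · rintro (⟨hre, _, _⟩ | ⟨_, ha, hb⟩)
      · rw [hdr] at hre; norm_num at hre
      · exact ⟨by rw [ha, hb, hdr]; norm_num, Or.inl ha, Or.inr hb⟩
  -- (μ.prod μ) (E \ G) = 0
  have hnull : (μ.prod μ) (E \ G) = 0 := by
    have hsub : E \ G ⊆ ({p : 𝒳 × ℝ | p.2 ≠ 1 ∧ p.2 ≠ -1} ×ˢ Set.univ)
        ∪ (Set.univ ×ˢ {p : 𝒳 × ℝ | p.2 ≠ 1 ∧ p.2 ≠ -1}) := by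
      rintro p ⟨-, hpG⟩
      simp only [hG, Set.mem_setOf_eq, not_and_or, not_or] at hpG
      rcases hpG with h | h
      · exact Or.inl ⟨h, Set.mem_univ _⟩
      · exact Or.inr ⟨Set.mem_univ _, h⟩
    refine measure_mono_null hsub (le_antisymm ?_ (zero_le))
    calc (μ.prod μ) (({p : 𝒳 × ℝ | p.2 ≠ 1 ∧ p.2 ≠ -1} ×ˢ Set.univ)
        ∪ (Set.univ ×ˢ {p : 𝒳 × ℝ | p.2 ≠ 1 ∧ p.2 ≠ -1}))
        ≤ (μ.prod μ) ({p : 𝒳 × ℝ | p.2 ≠ 1 ∧ p.2 ≠ -1} ×ˢ Set.univ)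
          + (μ.prod μ) (Set.univ ×ˢ {p : 𝒳 × ℝ | p.2 ≠ 1 ∧ p.2 ≠ -1}) := measure_union_le _ _
      _ = 0 := by rw [Measure.prod_prod, Measure.prod_prod, hY]; simp
  -- measure of E
  have hmE : (μ.prod μ) E = (μ.prod μ) A1 + (μ.prod μ) A2 := by
    have h1 : (μ.prod μ) E = (μ.prod μ) (E ∩ G) := by
      rw [← measure_inter_add_diff E hGm, hnull, add_zero]
    rw [h1, hEG]
    refine measure_union ?_ ((hFm hCm.compl).inter (hS1.prod hSm))
    refine Set.disjoint_left.2 fun p hp hp' => ?_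
    have h1 : p.1.2 = -1 := hp.2.1
    have h2 : p.1.2 = 1 := hp'.2.1
    rw [h2] at h1; norm_num at h1
  -- identify each piece
  have hμpos := map_restrict_pos μ ν hν η hηm hη01 hcond
  have hμneg := map_restrict_neg μ hY ν hν η hηm hη01 hcond
  have hwd := wd_prod ν (f := fun x => 1 - ENNReal.ofReal (η x))
    (g := fun x => ENNReal.ofReal (η x)) (measurable_const.sub hηm.ennreal_ofReal)
    hηm.ennreal_ofReal (fun x => tsub_le_self) (fun x => ENNReal.ofReal_le_one.2 (hη01 x).2)
  have hwd' := wd_prod ν (g := fun x => 1 - ENNReal.ofReal (η x))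
    (f := fun x => ENNReal.ofReal (η x)) hηm.ennreal_ofReal
    (measurable_const.sub hηm.ennreal_ofReal)
    (fun x => ENNReal.ofReal_le_one.2 (hη01 x).2) (fun x => tsub_le_self)
  have hpA1 : (μ.prod μ) A1
      = ∫⁻ w in C, (1 - ENNReal.ofReal (η w.1)) * ENNReal.ofReal (η w.2) ∂(ν.prod ν) := by
    rw [hA1, ← Measure.restrict_apply (hFm hCm), ← Measure.prod_restrict,
      ← Measure.map_apply hFm hCm]
    rw [← Measure.map_prod_map _ _ measurable_fst measurable_fst, hμpos, hμneg, hwd,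
      withDensity_apply _ hCm]
  have hpA2 : (μ.prod μ) A2
      = ∫⁻ w in Cᶜ, ENNReal.ofReal (η w.1) * (1 - ENNReal.ofReal (η w.2)) ∂(ν.prod ν) := by
    rw [hA2, ← Measure.restrict_apply (hFm hCm.compl), ← Measure.prod_restrict,
      ← Measure.map_apply hFm hCm.compl]
    rw [← Measure.map_prod_map _ _ measurable_fst measurable_fst, hμpos, hμneg, hwd',
      withDensity_apply _ hCm.compl]
  -- combine
  rw [rankRisk]
  congr 1
  have hadd := lintegral_add_compl (μ := ν.prod ν)
    (f := fun w => (if r w.1 w.2 = 1 then (1 - ENNReal.ofReal (η w.1)) * ENNReal.ofReal (η w.2)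
        else ENNReal.ofReal (η w.1) * (1 - ENNReal.ofReal (η w.2)))) hCm
  rw [hmE, hpA1, hpA2, ← hadd]
  congr 1
  · refine setLIntegral_congr_fun hCm (fun w hw => ?_)
    simp only [hC, Set.mem_setOf_eq] at hw
    rw [if_pos hw]
  · refine setLIntegral_congr_fun hCm.compl (fun w hw => ?_)
    simp only [hC, Set.mem_compl_iff, Set.mem_setOf_eq] at hw
    rw [if_neg hw]

end Aux

/-- In the bipartite ranking problem, the Bayes ranking risk satisfies
`L* = E[min{η(X)(1-η(X')), η(X')(1-η(X))}] = E[min{η(X), η(X')}] - (E[η(X)])²`. -/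
theorem stmt1 {𝒳 : Type*} [MeasurableSpace 𝒳]
    (μ : Measure (𝒳 × ℝ)) [IsProbabilityMeasure μ]
    -- bipartite problem: the label `Y` takes values in `{-1, 1}` almost surely
    (hY : μ {p : 𝒳 × ℝ | p.2 ≠ 1 ∧ p.2 ≠ -1} = 0)
    (ν : Measure 𝒳) (hν : ν = μ.map Prod.fst)
    (η : 𝒳 → ℝ) (hηm : Measurable η) (hη01 : ∀ x, 0 ≤ η x ∧ η x ≤ 1)
    -- `η` is a version of the conditional probability `P{Y = 1 | X = x}`:
    (hcond : ∀ B : Set 𝒳, MeasurableSet B →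
      (μ {p : 𝒳 × ℝ | p.1 ∈ B ∧ p.2 = 1}).toReal = ∫ x in B, η x ∂ν) :
    bayesRankRisk μ
        = ∫ w, min (η w.1 * (1 - η w.2)) (η w.2 * (1 - η w.1)) ∂(ν.prod ν) ∧
    bayesRankRisk μ
        = (∫ w, min (η w.1) (η w.2) ∂(ν.prod ν)) - (∫ x, η x ∂ν) ^ 2 := by
  haveI : IsProbabilityMeasure ν := hν ▸ Measure.isProbabilityMeasure_map measurable_fst.aemeasurable
  set m : 𝒳 × 𝒳 → ℝ := fun w => min (η w.1 * (1 - η w.2)) (η w.2 * (1 - η w.1)) with hm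
  have hη1 : Measurable fun w : 𝒳 × 𝒳 => η w.1 := hηm.comp measurable_fst
  have hη2 : Measurable fun w : 𝒳 × 𝒳 => η w.2 := hηm.comp measurable_snd
  have hmmeas : Measurable m :=
    (hη1.mul (measurable_const.sub hη2)).min (hη2.mul (measurable_const.sub hη1))
  have hmnonneg : ∀ w, 0 ≤ m w := fun w =>
    le_min (mul_nonneg (hη01 w.1).1 (by linarith [(hη01 w.2).2]))
      (mul_nonneg (hη01 w.2).1 (by linarith [(hη01 w.1).2]))
  -- ofReal computations
  have hofm : ∀ a b : ℝ, 0 ≤ a → a ≤ 1 → 0 ≤ b →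
      (1 - ENNReal.ofReal a) * ENNReal.ofReal b = ENNReal.ofReal ((1 - a) * b) := by
    intro a b ha ha1 hb
    rw [ENNReal.ofReal_mul (by linarith), ENNReal.ofReal_sub 1 ha, ENNReal.ofReal_one]
  have hofm' : ∀ a b : ℝ, 0 ≤ a → 0 ≤ b → b ≤ 1 →
      ENNReal.ofReal a * (1 - ENNReal.ofReal b) = ENNReal.ofReal (a * (1 - b)) := by
    intro a b ha hb hb1
    rw [ENNReal.ofReal_mul ha, ENNReal.ofReal_sub 1 hb, ENNReal.ofReal_one]
  -- the Bayes rule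
  set rb : 𝒳 → 𝒳 → ℝ :=
    fun x x' => if η x' * (1 - η x) ≤ η x * (1 - η x') then 1 else -1 with hrb
  have hrbR : IsRankingRule rb := by
    constructor
    · refine Measurable.ite ?_ measurable_const measurable_const
      exact measurableSet_le (hη2.mul (measurable_const.sub hη1))
        (hη1.mul (measurable_const.sub hη2))
    · intro x x'
      by_cases h : η x' * (1 - η x) ≤ η x * (1 - η x')
      · exact Or.inl (if_pos h)
      · exact Or.inr (if_neg h)
  -- pointwise value of the Bayes rule cost
  have hgb : ∀ w : 𝒳 × 𝒳,
      (if rb w.1 w.2 = 1 then (1 - ENNReal.ofReal (η w.1)) * ENNReal.ofReal (η w.2)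
        else ENNReal.ofReal (η w.1) * (1 - ENNReal.ofReal (η w.2)))
      = ENNReal.ofReal (m w) := by
    intro w
    by_cases h : η w.2 * (1 - η w.1) ≤ η w.1 * (1 - η w.2)
    · rw [if_pos (if_pos h), hofm _ _ (hη01 w.1).1 (hη01 w.1).2 (hη01 w.2).1]
      rw [hm]
      simp only [min_eq_right h]
      ring_nf
    · have hne : rb w.1 w.2 ≠ 1 := by rw [hrb]; simp only [if_neg h]; norm_num
      rw [if_neg hne, hofm' _ _ (hη01 w.1).1 (hη01 w.2).1 (hη01 w.2).2]
      rw [hm]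
      simp only [min_eq_left (le_of_not_ge h)]
  -- lower bound pointwise
  have hge : ∀ (r : 𝒳 → 𝒳 → ℝ), IsRankingRule r → ∀ w : 𝒳 × 𝒳,
      ENNReal.ofReal (m w)
        ≤ (if r w.1 w.2 = 1 then (1 - ENNReal.ofReal (η w.1)) * ENNReal.ofReal (η w.2)
          else ENNReal.ofReal (η w.1) * (1 - ENNReal.ofReal (η w.2))) := by
    intro r hr w
    rcases hr.2 w.1 w.2 with h | h
    · rw [if_pos h, hofm _ _ (hη01 w.1).1 (hη01 w.1).2 (hη01 w.2).1]
      refine ENNReal.ofReal_le_ofReal ?_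
      rw [hm]
      exact (min_le_right _ _).trans (le_of_eq (mul_comm _ _))
    · have hne : r w.1 w.2 ≠ 1 := by rw [h]; norm_num
      rw [if_neg hne, hofm' _ _ (hη01 w.1).1 (hη01 w.2).1 (hη01 w.2).2]
      refine ENNReal.ofReal_le_ofReal ?_
      rw [hm]
      exact min_le_left _ _
  -- finiteness
  have hfin : ∀ (r : 𝒳 → 𝒳 → ℝ), (∫⁻ w : 𝒳 × 𝒳,
      (if r w.1 w.2 = 1 then (1 - ENNReal.ofReal (η w.1)) * ENNReal.ofReal (η w.2)
        else ENNReal.ofReal (η w.1) * (1 - ENNReal.ofReal (η w.2))) ∂(ν.prod ν)) ≠ ⊤ := by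
    intro r
    refine ne_of_lt (lt_of_le_of_lt (lintegral_mono (g := fun _ => (1 : ℝ≥0∞)) fun w => ?_) ?_)
    · split
      · exact mul_le_one' (le_trans tsub_le_self le_rfl)
          (ENNReal.ofReal_le_one.2 (hη01 w.2).2)
      · exact mul_le_one' (ENNReal.ofReal_le_one.2 (hη01 w.1).2)
          (le_trans tsub_le_self le_rfl)
    · simp
  set V : ℝ := (∫⁻ w, ENNReal.ofReal (m w) ∂(ν.prod ν)).toReal with hV
  have hVmem : V ∈ {l : ℝ | ∃ r, IsRankingRule r ∧ l = rankRisk μ r} := by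
    refine ⟨rb, hrbR, ?_⟩
    rw [rankRisk_eq μ hY ν hν η hηm hη01 hcond rb hrbR, hV]
    congr 1
    exact lintegral_congr fun w => (hgb w).symm
  have hlbd : ∀ l ∈ {l : ℝ | ∃ r, IsRankingRule r ∧ l = rankRisk μ r}, V ≤ l := by
    rintro l ⟨r, hr, rfl⟩
    rw [rankRisk_eq μ hY ν hν η hηm hη01 hcond r hr, hV]
    exact ENNReal.toReal_mono (hfin r) (lintegral_mono (hge r hr))
  have hbayes : bayesRankRisk μ = V := by
    rw [bayesRankRisk]
    exact le_antisymm (csInf_le ⟨V, hlbd⟩ hVmem) (le_csInf ⟨V, hVmem⟩ hlbd)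
  have hint1 : ∫ w, m w ∂(ν.prod ν) = V := by
    rw [hV, integral_eq_lintegral_of_nonneg_ae (Filter.Eventually.of_forall hmnonneg)
      hmmeas.aestronglyMeasurable]
  refine ⟨by rw [hbayes, ← hint1], ?_⟩
  rw [hbayes, ← hint1]
  have hmw : ∀ w : 𝒳 × 𝒳, m w = min (η w.1) (η w.2) - η w.1 * η w.2 := by
    intro w
    rw [hm]
    show min (η w.1 * (1 - η w.2)) (η w.2 * (1 - η w.1)) = _
    rw [mul_one_sub, mul_one_sub, mul_comm (η w.2) (η w.1), min_sub_sub_right]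
  have hint_min : Integrable (fun w : 𝒳 × 𝒳 => min (η w.1) (η w.2)) (ν.prod ν) := by
    refine Integrable.mono' (integrable_const 1) (hη1.min hη2).aestronglyMeasurable
      (Filter.Eventually.of_forall fun w => ?_)
    rw [Real.norm_eq_abs, abs_le]
    constructor
    · have := (hη01 w.1).1; have := (hη01 w.2).1
      have : (0:ℝ) ≤ min (η w.1) (η w.2) := le_min (hη01 w.1).1 (hη01 w.2).1
      linarith
    · exact (min_le_left _ _).trans (hη01 w.1).2
  have hint_mul : Integrable (fun w : 𝒳 × 𝒳 => η w.1 * η w.2) (ν.prod ν) := by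
    refine Integrable.mono' (integrable_const 1) (hη1.mul hη2).aestronglyMeasurable
      (Filter.Eventually.of_forall fun w => ?_)
    rw [Real.norm_eq_abs, abs_le]
    constructor
    · have := mul_nonneg (hη01 w.1).1 (hη01 w.2).1; linarith
    · exact mul_le_one₀ (hη01 w.1).2 (hη01 w.2).1 (hη01 w.2).2
  calc ∫ w, m w ∂(ν.prod ν)
      = ∫ w : 𝒳 × 𝒳, (min (η w.1) (η w.2) - η w.1 * η w.2) ∂(ν.prod ν) := by
        exact integral_congr_ae (Filter.Eventually.of_forall hmw)
    _ = (∫ w : 𝒳 × 𝒳, min (η w.1) (η w.2) ∂(ν.prod ν))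
        - ∫ w : 𝒳 × 𝒳, η w.1 * η w.2 ∂(ν.prod ν) := integral_sub hint_min hint_mul
    _ = (∫ w : 𝒳 × 𝒳, min (η w.1) (η w.2) ∂(ν.prod ν)) - (∫ x, η x ∂ν) ^ 2 := by
        rw [integral_prod_mul η η, sq]
end

section
/- In the noise-free regression model Y = m(X) for some measurable function m : 𝒳 → ℝ, one has L* = 0, q_r(x,x') = 1{(m(x) − m(x'))·r(x,x') < 0}, and for every ranking rule r, Var(h_r(X,Y)) ≤ E[q_r(X,X')²] = L(r); that is, the variance condition Var(h_r(X,Y)) ≤ c·Λ(r)^α holds with c = 1 and α = 1. -/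
open MeasureTheory

/-- The ranking rule `r(x,x') = 2·1{s(x) ≥ s(x')} - 1` induced by a scoring
function `s`. -/
noncomputable def scoringRule {𝒳 : Type*} (s : 𝒳 → ℝ) : 𝒳 → 𝒳 → ℝ :=
  fun x x' => 2 * (if s x' ≤ s x then 1 else 0) - 1

/-- The kernel `q_r((x,y),(x',y')) = 1{(y-y')r(x,x') < 0} - 1{(y-y')r*(x,x') < 0}`. -/
noncomputable def qKer {𝒳 : Type*} (rstar r : 𝒳 → 𝒳 → ℝ) (p q : 𝒳 × ℝ) : ℝ :=
  (if (p.2 - q.2) * r p.1 q.1 < 0 then 1 else 0) -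
    (if (p.2 - q.2) * rstar p.1 q.1 < 0 then 1 else 0)

/-- The excess ranking risk `Λ(r) = L(r) - L*`. -/
noncomputable def excessRisk {𝒳 : Type*} [MeasurableSpace 𝒳]
    (μ : Measure (𝒳 × ℝ)) (rstar r : 𝒳 → 𝒳 → ℝ) : ℝ :=
  rankRisk μ r - rankRisk μ rstar

/-- `h_r(x,y) = E[q_r((x,y),(X',Y'))] - Λ(r)`. -/
noncomputable def hFun {𝒳 : Type*} [MeasurableSpace 𝒳]
    (μ : Measure (𝒳 × ℝ)) (rstar r : 𝒳 → 𝒳 → ℝ) (p : 𝒳 × ℝ) : ℝ :=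
  (∫ q, qKer rstar r p q ∂μ) - excessRisk μ rstar r

lemma half_mul_neg_iff (a b : ℝ) : a / 2 * b < 0 ↔ a * b < 0 := by
  rw [div_mul_eq_mul_div]
  constructor <;> intro h <;> linarith

lemma scoring_nonneg {𝒳 : Type*} (m : 𝒳 → ℝ) (x x' : 𝒳) :
    ¬ ((m x - m x') * scoringRule m x x' < 0) := by
  unfold scoringRule
  split
  · next h => nlinarith
  · next h => push_neg at h; nlinarith

lemma scoring_meas {𝒳 : Type*} [MeasurableSpace 𝒳] {m : 𝒳 → ℝ} (hm : Measurable m) :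
    Measurable (fun p : 𝒳 × 𝒳 => scoringRule m p.1 p.2) := by
  unfold scoringRule
  exact ((measurable_const.ite (measurableSet_le (hm.comp measurable_snd)
    (hm.comp measurable_fst)) measurable_const).const_mul 2).sub measurable_const

lemma rankRisk_map {𝒳 : Type*} [MeasurableSpace 𝒳]
    (ν : Measure 𝒳) [IsProbabilityMeasure ν] {m : 𝒳 → ℝ} (hm : Measurable m)
    {r : 𝒳 → 𝒳 → ℝ} (hr : Measurable (fun p : 𝒳 × 𝒳 => r p.1 p.2)) :
    rankRisk (ν.map (fun x => (x, m x))) r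
      = ((ν.prod ν) {w : 𝒳 × 𝒳 | (m w.1 - m w.2) * r w.1 w.2 < 0}).toReal := by
  have hF : Measurable (fun x : 𝒳 => (x, m x)) := measurable_id.prodMk hm
  have hS : MeasurableSet {p : (𝒳 × ℝ) × (𝒳 × ℝ) |
      (p.1.2 - p.2.2) / 2 * r p.1.1 p.2.1 < 0} := by
    exact measurableSet_lt (((measurable_fst.snd.sub measurable_snd.snd).div_const 2).mul
      (hr.comp (measurable_fst.fst.prodMk measurable_snd.fst))) measurable_const
  unfold rankRisk
  rw [Measure.map_prod_map _ _ hF hF, Measure.map_apply (hF.prodMap hF) hS]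
  congr 2
  ext w
  simp only [Set.mem_preimage, Set.mem_setOf_eq, Prod.map]
  exact half_mul_neg_iff _ _

lemma qKer_noise_free {𝒳 : Type*} (m : 𝒳 → ℝ) (r : 𝒳 → 𝒳 → ℝ) (x x' : 𝒳) :
    qKer (scoringRule m) r (x, m x) (x', m x')
      = if (m x - m x') * r x x' < 0 then 1 else 0 := by
  unfold qKer
  simp [scoring_nonneg m x x']

/-- In the noise-free regression model `Y = m(X)`, one has `L* = 0`
(the Bayes rule being the one induced by the scoring function `m`),
`q_r(x,x') = 1{(m(x) - m(x'))·r(x,x') < 0}`, and for every ranking rule `r`,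
`Var(h_r(X,Y)) ≤ E[q_r(X,X')²] = L(r)`; that is, the variance condition holds with
`c = 1` and `α = 1`. -/
theorem stmt12 {𝒳 : Type*} [MeasurableSpace 𝒳]
    (ν : Measure 𝒳) [IsProbabilityMeasure ν]
    (m : 𝒳 → ℝ) (hm : Measurable m)
    -- the noise-free model `Y = m(X)`: the law of `(X,Y)` is the image of `ν` under
    -- `x ↦ (x, m(x))`
    (μ : Measure (𝒳 × ℝ)) (hμ : μ = ν.map (fun x => (x, m x))) :
    -- `L* = 0`, the Bayes rule being induced by the scoring function `s* = m`:
    rankRisk μ (scoringRule m) = 0 ∧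
    (∀ r : 𝒳 → 𝒳 → ℝ, IsRankingRule r → rankRisk μ (scoringRule m) ≤ rankRisk μ r) ∧
    -- on the support of the model, `q_r` reduces to `1{(m(x)-m(x'))·r(x,x') < 0}`:
    (∀ r : 𝒳 → 𝒳 → ℝ, ∀ x x' : 𝒳,
      qKer (scoringRule m) r (x, m x) (x', m x')
        = if (m x - m x') * r x x' < 0 then 1 else 0) ∧
    -- the variance condition with `c = 1`, `α = 1`:
    (∀ r : 𝒳 → 𝒳 → ℝ, IsRankingRule r →
      (∫ p, (hFun μ (scoringRule m) r p
            - ∫ q, hFun μ (scoringRule m) r q ∂μ) ^ 2 ∂μ)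
        ≤ ∫ w, (if (m w.1 - m w.2) * r w.1 w.2 < 0 then (1:ℝ) else 0) ^ 2
            ∂(ν.prod ν) ∧
      (∫ w, (if (m w.1 - m w.2) * r w.1 w.2 < 0 then (1:ℝ) else 0) ^ 2 ∂(ν.prod ν))
        = rankRisk μ r) := by
  have hF : Measurable (fun x : 𝒳 => (x, m x)) := measurable_id.prodMk hm
  have hμprob : IsProbabilityMeasure μ := by
    rw [hμ]; exact Measure.isProbabilityMeasure_map hF.aemeasurable
  have part1 : rankRisk μ (scoringRule m) = 0 := by
    rw [hμ, rankRisk_map ν hm (scoring_meas hm)]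
    have : {w : 𝒳 × 𝒳 | (m w.1 - m w.2) * scoringRule m w.1 w.2 < 0} = ∅ := by
      ext w; simp [scoring_nonneg m w.1 w.2]
    simp [this]
  refine ⟨part1, fun r _ => part1 ▸ ENNReal.toReal_nonneg,
    fun r x x' => qKer_noise_free m r x x', fun r hr => ?_⟩
  -- notation
  set q : 𝒳 × 𝒳 → ℝ := fun w => if (m w.1 - m w.2) * r w.1 w.2 < 0 then 1 else 0 with hq_def
  have hS : MeasurableSet {w : 𝒳 × 𝒳 | (m w.1 - m w.2) * r w.1 w.2 < 0} :=
    measurableSet_lt (((hm.comp measurable_fst).sub (hm.comp measurable_snd)).mul hr.1)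
      measurable_const
  have hq_meas : Measurable q := measurable_const.ite hS measurable_const
  have hq01 : ∀ w, 0 ≤ q w ∧ q w ≤ 1 := by
    intro w; simp only [hq_def]; split <;> norm_num
  have hq_int : Integrable q (ν.prod ν) := by
    refine (integrable_const (1 : ℝ)).mono' hq_meas.aestronglyMeasurable ?_
    filter_upwards with w
    rw [Real.norm_eq_abs, abs_le]
    exact ⟨by linarith [(hq01 w).1], (hq01 w).2⟩
  set L : ℝ := ∫ w, q w ∂(ν.prod ν) with hL_def
  have hqsq : ∀ w, q w ^ 2 = q w := by
    intro w; simp only [hq_def]; split <;> norm_num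
  have hq2L : (∫ w, (if (m w.1 - m w.2) * r w.1 w.2 < 0 then (1:ℝ) else 0) ^ 2 ∂(ν.prod ν)) = L := by
    rw [hL_def]; exact integral_congr_ae (Filter.Eventually.of_forall hqsq)
  have hLrisk : L = rankRisk μ r := by
    rw [hμ, rankRisk_map ν hm hr.1, hL_def]
    have : q = Set.indicator {w : 𝒳 × 𝒳 | (m w.1 - m w.2) * r w.1 w.2 < 0}
        (fun _ => (1 : ℝ)) := by
      funext w; simp [hq_def, Set.indicator_apply, Set.mem_setOf_eq]
    rw [this, integral_indicator_const (1 : ℝ) hS, smul_eq_mul, mul_one]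
    rfl
  -- the conditional expectation f
  set f : 𝒳 → ℝ := fun x => ∫ y, q (x, y) ∂ν with hf_def
  have hf_sm : StronglyMeasurable f := hq_meas.stronglyMeasurable.integral_prod_right'
  have hf01 : ∀ x, 0 ≤ f x ∧ f x ≤ 1 := by
    intro x
    have hint : Integrable (fun y => q (x, y)) ν := by
      refine (integrable_const (1 : ℝ)).mono'
        (hq_meas.comp measurable_prodMk_left).aestronglyMeasurable ?_
      filter_upwards with y
      rw [Real.norm_eq_abs, abs_le]
      exact ⟨by linarith [(hq01 (x,y)).1], (hq01 (x,y)).2⟩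
    constructor
    · exact integral_nonneg fun y => (hq01 (x,y)).1
    · calc ∫ y, q (x, y) ∂ν ≤ ∫ _, (1:ℝ) ∂ν :=
            integral_mono hint (integrable_const 1) fun y => (hq01 (x,y)).2
        _ = 1 := by simp
  have hf_int : Integrable f ν := by
    refine (integrable_const (1 : ℝ)).mono' hf_sm.aestronglyMeasurable ?_
    filter_upwards with x
    rw [Real.norm_eq_abs, abs_le]
    exact ⟨by linarith [(hf01 x).1], (hf01 x).2⟩
  have hf2_int : Integrable (fun x => f x ^ 2) ν := by
    refine (integrable_const (1 : ℝ)).mono' (hf_sm.pow 2).aestronglyMeasurable ?_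
    filter_upwards with x
    rw [Real.norm_eq_abs, abs_le]
    constructor
    · nlinarith [(hf01 x).1, (hf01 x).2]
    · nlinarith [(hf01 x).1, (hf01 x).2]
  have hfL : ∫ x, f x ∂ν = L := (integral_prod q hq_int).symm
  -- measurability of the kernel
  have hqK : Measurable (fun pq : (𝒳 × ℝ) × (𝒳 × ℝ) => qKer (scoringRule m) r pq.1 pq.2) := by
    unfold qKer
    have h1 : Measurable (fun pq : (𝒳 × ℝ) × (𝒳 × ℝ) =>
        (pq.1.2 - pq.2.2) * r pq.1.1 pq.2.1) :=
      (measurable_fst.snd.sub measurable_snd.snd).mul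
        (hr.1.comp (measurable_fst.fst.prodMk measurable_snd.fst))
    have h2 : Measurable (fun pq : (𝒳 × ℝ) × (𝒳 × ℝ) =>
        (pq.1.2 - pq.2.2) * scoringRule m pq.1.1 pq.2.1) :=
      (measurable_fst.snd.sub measurable_snd.snd).mul
        ((scoring_meas hm).comp (measurable_fst.fst.prodMk measurable_snd.fst))
    exact (measurable_const.ite (measurableSet_lt h1 measurable_const) measurable_const).sub
      (measurable_const.ite (measurableSet_lt h2 measurable_const) measurable_const)
  set h : 𝒳 × ℝ → ℝ := hFun μ (scoringRule m) r with hh_def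
  have hh_meas : StronglyMeasurable h := by
    unfold h
    unfold hFun
    exact hqK.stronglyMeasurable.integral_prod_right'.sub stronglyMeasurable_const
  have hΛ : excessRisk μ (scoringRule m) r = L := by
    unfold excessRisk; rw [part1, hLrisk, sub_zero]
  -- h on the support
  have hA : ∀ x, h (x, m x) = f x - L := by
    intro x
    unfold h
    unfold hFun
    have hsl : Measurable (fun p : 𝒳 × ℝ => qKer (scoringRule m) r (x, m x) p) :=
      hqK.comp measurable_prodMk_left
    rw [hΛ, hμ, integral_map hF.aemeasurable hsl.aestronglyMeasurable]
    congr 1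
    refine integral_congr_ae (Filter.Eventually.of_forall fun x' => ?_)
    exact qKer_noise_free m r x x'
  -- integrals over μ reduce to ν
  have hmap : ∀ (g : 𝒳 × ℝ → ℝ), AEStronglyMeasurable g μ →
      ∫ p, g p ∂μ = ∫ x, g (x, m x) ∂ν := by
    intro g hg
    rw [hμ] at hg ⊢
    exact integral_map hF.aemeasurable hg
  have hEh : ∫ p, h p ∂μ = 0 := by
    rw [hmap h hh_meas.aestronglyMeasurable]
    have : ∫ x, h (x, m x) ∂ν = ∫ x, (f x - L) ∂ν :=
      integral_congr_ae (Filter.Eventually.of_forall hA)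
    rw [this, integral_sub hf_int (integrable_const L), hfL, integral_const]
    simp
  have hVar : (∫ p, (h p - ∫ p', h p' ∂μ) ^ 2 ∂μ) = ∫ x, (f x - L) ^ 2 ∂ν := by
    rw [hEh]
    simp only [sub_zero]
    rw [hmap (fun p => h p ^ 2) (hh_meas.pow 2).aestronglyMeasurable]
    refine integral_congr_ae (Filter.Eventually.of_forall fun x => ?_)
    simp only [hA x]
  -- the variance computation
  have hexp : ∫ x, (f x - L) ^ 2 ∂ν = (∫ x, f x ^ 2 ∂ν) - L ^ 2 := by
    have e1 : ∀ x, (f x - L) ^ 2 = (f x ^ 2 - (2 * L) * f x) + L ^ 2 := by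
      intro x; ring
    calc ∫ x, (f x - L) ^ 2 ∂ν
        = ∫ x, ((f x ^ 2 - (2 * L) * f x) + L ^ 2) ∂ν :=
          integral_congr_ae (Filter.Eventually.of_forall e1)
      _ = (∫ x, (f x ^ 2 - (2 * L) * f x) ∂ν) + ∫ _, L ^ 2 ∂ν :=
          integral_add (hf2_int.sub (hf_int.const_mul _)) (integrable_const _)
      _ = ((∫ x, f x ^ 2 ∂ν) - (2 * L) * ∫ x, f x ∂ν) + L ^ 2 := by
          rw [integral_sub hf2_int (hf_int.const_mul _), integral_const_mul,
            integral_const]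
          simp
      _ = (∫ x, f x ^ 2 ∂ν) - L ^ 2 := by rw [hfL]; ring
  have hbound : ∫ x, (f x - L) ^ 2 ∂ν ≤ L := by
    rw [hexp]
    have h1 : ∫ x, f x ^ 2 ∂ν ≤ ∫ x, f x ∂ν :=
      integral_mono hf2_int hf_int fun x => by nlinarith [(hf01 x).1, (hf01 x).2]
    nlinarith [sq_nonneg L, hfL]
  refine ⟨?_, by rw [hq2L, hLrisk]⟩
  rw [hq2L]
  calc (∫ p, (h p - ∫ p', h p' ∂μ) ^ 2 ∂μ) = ∫ x, (f x - L) ^ 2 ∂ν := hVar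
    _ ≤ L := hbound
end

section
/- In the heteroscedastic Gaussian regression model Y = m(X) + σ(X)·ε, suppose m(X) has a bounded density and the conditional standard deviation σ(x) is bounded over 𝒳. Then for every α ∈ [0,1) there exists a constant c > 0 such that for all x ∈ 𝒳, E_{X'}[ |Δ(x,X')|^{−α} ] ≤ c, where Δ(x,x') = (m(x) − m(x'))/√(σ²(x) + σ²(x')). -/
open MeasureTheory

private lemma stmt14_intOn {α : ℝ} (h0 : 0 < α) (h1 : α < 1) :
    IntegrableOn (fun v : ℝ => |v| ^ (-α)) (Set.Icc (-1:ℝ) 1) volume := by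
  have hIoo : IntegrableOn (fun v : ℝ => v ^ (-α)) (Set.Ioo (0:ℝ) 1) volume :=
    (intervalIntegral.integrableOn_Ioo_rpow_iff one_pos).2 (by linarith)
  have h01 : IntegrableOn (fun v : ℝ => |v| ^ (-α)) (Set.Ioo (0:ℝ) 1) volume :=
    (integrableOn_congr_fun (fun v hv => by rw [abs_of_pos hv.1]) measurableSet_Ioo).2 hIoo
  have hneg : IntegrableOn (fun v : ℝ => |v| ^ (-α)) (Set.Ioo (-1:ℝ) 0) volume := by
    have h2 := (h01.integrable_indicator measurableSet_Ioo).comp_neg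
    have h3 : (fun v : ℝ => (Set.Ioo (0:ℝ) 1).indicator (fun v : ℝ => |v| ^ (-α)) (-v))
        = (Set.Ioo (-1:ℝ) 0).indicator (fun v : ℝ => |v| ^ (-α)) := by
      funext v
      by_cases hv : v ∈ Set.Ioo (-1:ℝ) 0
      · rw [Set.indicator_of_mem hv, Set.indicator_of_mem
          (by obtain ⟨a, b⟩ := hv; exact ⟨by linarith, by linarith⟩), abs_neg]
      · rw [Set.indicator_of_notMem hv,
          Set.indicator_of_notMem (fun hc => hv ⟨by linarith [hc.2], by linarith [hc.1]⟩)]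
    rw [h3] at h2
    exact (integrable_indicator_iff measurableSet_Ioo).1 h2
  have hIco : IntegrableOn (fun v : ℝ => |v| ^ (-α)) (Set.Ico (0:ℝ) 1) volume := by
    rw [IntegrableOn, ← Measure.restrict_congr_set Ioo_ae_eq_Ico]
    exact h01
  have hU : IntegrableOn (fun v : ℝ => |v| ^ (-α)) (Set.Ioo (-1:ℝ) 0 ∪ Set.Ico 0 1) volume :=
    hneg.union hIco
  have hset : Set.Ioo (-1:ℝ) 0 ∪ Set.Ico 0 1 = Set.Ioo (-1:ℝ) 1 := by
    ext v
    constructor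
    · rintro (⟨a,b⟩|⟨a,b⟩) <;> exact ⟨by linarith, by linarith⟩
    · rintro ⟨a,b⟩; rcases lt_or_ge v 0 with h|h
      · exact Or.inl ⟨a, h⟩
      · exact Or.inr ⟨h, b⟩
  rw [hset] at hU
  rw [IntegrableOn, ← Measure.restrict_congr_set Ioo_ae_eq_Icc]
  exact hU

/-- **Corollary 10 of the paper.** In the heteroscedastic Gaussian
regression model `Y = m(X) + σ(X)·ε`, if `m(X)` has a bounded density and `σ` is
bounded over `𝒳`, then for every `α ∈ [0,1)` there is a constant `c > 0` such that
`E_{X'}[|Δ(x,X')|^{-α}] ≤ c` for all `x`, where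
`Δ(x,x') = (m(x) - m(x'))/√(σ²(x) + σ²(x'))`. -/
theorem stmt14 {𝒳 : Type*} [MeasurableSpace 𝒳]
    -- the law of `X`:
    (ν : Measure 𝒳) [IsProbabilityMeasure ν]
    (m σ : 𝒳 → ℝ) (hm : Measurable m) (hσ : Measurable σ) (hσpos : ∀ x, 0 < σ x)
    -- `m(X)` has a density bounded by `B`:
    (B : ℝ) (hB : 0 < B)
    (f : ℝ → ENNReal) (hf : ν.map m = MeasureTheory.volume.withDensity f)
    (hfB : ∀ u, f u ≤ ENNReal.ofReal B)
    -- `σ` is bounded over `𝒳`: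
    (S : ℝ) (hS : ∀ x, σ x ≤ S) :
    ∀ α : ℝ, 0 ≤ α → α < 1 → ∃ c : ℝ, 0 < c ∧ ∀ x,
      ∫ x', |(m x - m x') / Real.sqrt (σ x ^ 2 + σ x' ^ 2)| ^ (-α) ∂ν ≤ c := by
  intro α hα0' hα1
  rcases eq_or_lt_of_le hα0' with rfl | hα0
  · refine ⟨1, one_pos, fun x => ?_⟩
    simp only [neg_zero, Real.rpow_zero]
    simp [measure_univ]
  -- now 0 < α < 1
  have hne : Nonempty 𝒳 := by
    by_contra h
    rw [not_nonempty_iff] at h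
    have h1 : ν Set.univ = 1 := measure_univ
    rw [Set.univ_eq_empty_iff.2 h, measure_empty] at h1
    exact zero_ne_one h1
  obtain ⟨x₀⟩ := hne
  have hS0 : 0 < S := lt_of_lt_of_le (hσpos x₀) (hS x₀)
  set K : ℝ := (Real.sqrt 2 * S) ^ α with hKdef
  have hKpos : 0 < K := Real.rpow_pos_of_pos (by positivity) α
  set C₀ : ENNReal := ∫⁻ v in Set.Icc (-1:ℝ) 1, ENNReal.ofReal (|v| ^ (-α)) ∂volume with hC₀def
  have hC₀ : C₀ < ⊤ := by
    have hint := stmt14_intOn hα0 hα1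
    have h2 := hint.2
    rw [HasFiniteIntegral] at h2
    calc C₀ = ∫⁻ v in Set.Icc (-1:ℝ) 1, ‖|v| ^ (-α)‖ₑ ∂volume :=
          lintegral_congr fun v =>
            (Real.enorm_eq_ofReal (Real.rpow_nonneg (abs_nonneg v) _)).symm
      _ < ⊤ := h2
  set Ctot : ENNReal := ENNReal.ofReal K * (ENNReal.ofReal B * C₀ + 1) with hCtotdef
  have hCtot : Ctot ≠ ⊤ := by
    apply ENNReal.mul_ne_top ENNReal.ofReal_ne_top
    exact ENNReal.add_ne_top.2 ⟨ENNReal.mul_ne_top ENNReal.ofReal_ne_top hC₀.ne, ENNReal.one_ne_top⟩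
  refine ⟨Ctot.toReal + 1, add_pos_of_nonneg_of_pos ENNReal.toReal_nonneg one_pos, fun x => ?_⟩
  set t : ℝ := m x with htdef
  -- the integrand
  set F : 𝒳 → ℝ := fun x' => |(t - m x') / Real.sqrt (σ x ^ 2 + σ x' ^ 2)| ^ (-α) with hFdef
  have hFmeas : Measurable F := by fun_prop
  have hFnonneg : ∀ x', 0 ≤ F x' := fun x' => Real.rpow_nonneg (abs_nonneg _) _
  -- pointwise bound
  have hpt : ∀ x', F x' ≤ K * |t - m x'| ^ (-α) := by
    intro x'
    set s : ℝ := Real.sqrt (σ x ^ 2 + σ x' ^ 2) with hsdef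
    have hspos : 0 < s := Real.sqrt_pos.2 (by have h1 := hσpos x; positivity)
    have hsle : s ≤ Real.sqrt 2 * S := by
      have h1 : σ x ^ 2 + σ x' ^ 2 ≤ 2 * S ^ 2 := by
        have := hσpos x
        have := hσpos x'
        nlinarith [hS x, hS x']
      calc s ≤ Real.sqrt (2 * S ^ 2) := Real.sqrt_le_sqrt h1
        _ = Real.sqrt 2 * S := by
            rw [Real.sqrt_mul (by norm_num), Real.sqrt_sq hS0.le]
    have h2 : F x' = |t - m x'| ^ (-α) * s ^ α := by
      rw [hFdef]
      simp only
      rw [abs_div, abs_of_pos hspos, Real.div_rpow (abs_nonneg _) hspos.le,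
        Real.rpow_neg hspos.le, div_eq_mul_inv, inv_inv]
    rw [h2]
    calc |t - m x'| ^ (-α) * s ^ α ≤ |t - m x'| ^ (-α) * K :=
          mul_le_mul_of_nonneg_left
            (Real.rpow_le_rpow hspos.le hsle hα0') (Real.rpow_nonneg (abs_nonneg _) _)
      _ = K * |t - m x'| ^ (-α) := mul_comm _ _
  -- pass to lintegral
  have hFint : ∫ x', F x' ∂ν = (∫⁻ x', ENNReal.ofReal (F x') ∂ν).toReal := by
    rw [integral_eq_lintegral_of_nonneg_ae (Filter.Eventually.of_forall hFnonneg)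
      hFmeas.aestronglyMeasurable]
  set μ : Measure ℝ := ν.map m with hμdef
  haveI hμprob : IsProbabilityMeasure μ := Measure.isProbabilityMeasure_map hm.aemeasurable
  have hHmeas : Measurable fun u : ℝ => ENNReal.ofReal (|t - u| ^ (-α)) := by
    apply Measurable.ennreal_ofReal; fun_prop
  -- the set near the singularity
  set A : Set ℝ := (fun u => |t - u|) ⁻¹' Set.Iic 1 with hAdef
  have hA : MeasurableSet A :=
    ((measurable_const.sub measurable_id).abs) measurableSet_Iic
  -- μ is dominated by B * Lebesgue
  have hle : μ ≤ (ENNReal.ofReal B) • volume := by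
    rw [hf]
    refine Measure.le_iff.2 fun sS hsS => ?_
    rw [withDensity_apply f hsS]
    calc ∫⁻ a in sS, f a ∂volume ≤ ∫⁻ _a in sS, ENNReal.ofReal B ∂volume :=
          lintegral_mono fun a => hfB a
      _ = ENNReal.ofReal B * volume sS := by rw [setLIntegral_const]
      _ = ((ENNReal.ofReal B) • volume) sS := by rw [Measure.smul_apply, smul_eq_mul]
  -- bound on A via Lebesgue
  have hAbound : ∫⁻ u in A, ENNReal.ofReal (|t - u| ^ (-α)) ∂μ ≤ ENNReal.ofReal B * C₀ := by
    have step1 : ∫⁻ u in A, ENNReal.ofReal (|t - u| ^ (-α)) ∂μ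
        ≤ ∫⁻ u in A, ENNReal.ofReal (|t - u| ^ (-α)) ∂((ENNReal.ofReal B) • volume) :=
      lintegral_mono' (Measure.restrict_mono (le_refl A) hle) (le_refl _)
    have step2 : ∫⁻ u in A, ENNReal.ofReal (|t - u| ^ (-α)) ∂((ENNReal.ofReal B) • volume)
        = ENNReal.ofReal B * ∫⁻ u in A, ENNReal.ofReal (|t - u| ^ (-α)) ∂volume := by
      rw [Measure.restrict_smul, lintegral_smul_measure, smul_eq_mul]
    have step3 : ∫⁻ u in A, ENNReal.ofReal (|t - u| ^ (-α)) ∂volume = C₀ := by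
      rw [← lintegral_indicator hA]
      have hind : ∀ u, A.indicator (fun u => ENNReal.ofReal (|t - u| ^ (-α))) u
          = (Set.Icc (-1:ℝ) 1).indicator (fun v => ENNReal.ofReal (|v| ^ (-α))) (u - t) := by
        intro u
        by_cases hu : u ∈ A
        · rw [Set.indicator_of_mem hu, Set.indicator_of_mem]
          · rw [abs_sub_comm]
          · have : |t - u| ≤ 1 := hu
            rw [Set.mem_Icc, ← abs_le, abs_sub_comm]
            exact this
        · rw [Set.indicator_of_notMem hu, Set.indicator_of_notMem]
          intro hc
          exact hu (by rw [Set.mem_Icc, ← abs_le, abs_sub_comm] at hc; exact hc)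
      calc ∫⁻ u, A.indicator (fun u => ENNReal.ofReal (|t - u| ^ (-α))) u ∂volume
          = ∫⁻ u, (Set.Icc (-1:ℝ) 1).indicator
              (fun v => ENNReal.ofReal (|v| ^ (-α))) (u - t) ∂volume :=
            lintegral_congr hind
        _ = ∫⁻ v, (Set.Icc (-1:ℝ) 1).indicator
              (fun v => ENNReal.ofReal (|v| ^ (-α))) v ∂volume :=
            lintegral_sub_right_eq_self _ t
        _ = C₀ := by rw [lintegral_indicator measurableSet_Icc]
    calc ∫⁻ u in A, ENNReal.ofReal (|t - u| ^ (-α)) ∂μ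
        ≤ ENNReal.ofReal B * ∫⁻ u in A, ENNReal.ofReal (|t - u| ^ (-α)) ∂volume := by
          rw [← step2]; exact step1
      _ = ENNReal.ofReal B * C₀ := by rw [step3]
  -- bound on Aᶜ
  have hAcbound : ∫⁻ u in Aᶜ, ENNReal.ofReal (|t - u| ^ (-α)) ∂μ ≤ 1 := by
    have h1 : ∀ u ∈ Aᶜ, ENNReal.ofReal (|t - u| ^ (-α)) ≤ 1 := by
      intro u hu
      have h2 : 1 ≤ |t - u| := le_of_lt (by simpa [hAdef] using hu)
      have h3 : |t - u| ^ (-α) ≤ 1 :=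
        Real.rpow_le_one_of_one_le_of_nonpos h2 (neg_nonpos.2 hα0')
      calc ENNReal.ofReal (|t - u| ^ (-α)) ≤ ENNReal.ofReal 1 := ENNReal.ofReal_le_ofReal h3
        _ = 1 := ENNReal.ofReal_one
    calc ∫⁻ u in Aᶜ, ENNReal.ofReal (|t - u| ^ (-α)) ∂μ ≤ ∫⁻ _u in Aᶜ, 1 ∂μ :=
          setLIntegral_mono measurable_const h1
      _ = μ Aᶜ := setLIntegral_one _
      _ ≤ 1 := prob_le_one
  -- combine
  have hmain : ∫⁻ x', ENNReal.ofReal (F x') ∂ν ≤ Ctot := by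
    calc ∫⁻ x', ENNReal.ofReal (F x') ∂ν
        ≤ ∫⁻ x', ENNReal.ofReal (K * |t - m x'| ^ (-α)) ∂ν :=
          lintegral_mono fun x' => ENNReal.ofReal_le_ofReal (hpt x')
      _ = ∫⁻ x', ENNReal.ofReal K * ENNReal.ofReal (|t - m x'| ^ (-α)) ∂ν := by
          congr 1; funext x'; rw [ENNReal.ofReal_mul hKpos.le]
      _ = ENNReal.ofReal K * ∫⁻ x', ENNReal.ofReal (|t - m x'| ^ (-α)) ∂ν :=
          lintegral_const_mul' _ _ ENNReal.ofReal_ne_top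
      _ = ENNReal.ofReal K * ∫⁻ u, ENNReal.ofReal (|t - u| ^ (-α)) ∂μ := by
          rw [hμdef, lintegral_map hHmeas hm]
      _ = ENNReal.ofReal K * (∫⁻ u in A, ENNReal.ofReal (|t - u| ^ (-α)) ∂μ
            + ∫⁻ u in Aᶜ, ENNReal.ofReal (|t - u| ^ (-α)) ∂μ) := by
          rw [lintegral_add_compl _ hA]
      _ ≤ ENNReal.ofReal K * (ENNReal.ofReal B * C₀ + 1) :=
          mul_le_mul_right (add_le_add hAbound hAcbound) _
      _ = Ctot := rfl
  rw [hFint]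
  have h4 : (∫⁻ x', ENNReal.ofReal (F x') ∂ν).toReal ≤ Ctot.toReal :=
    ENNReal.toReal_mono hCtot hmain
  linarith
end
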